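/- If the DM-TWC satisfies condition (a) and condition (b1), then C_I = C_O. -/

import Mathlib

open scoped BigOperators

/-- `P` is a probability distribution on the finite alphabet `A`. -/
def IsDist {A : Type*} [Fintype A] (P : A → ℝ) : Prop :=
  (∀ a, 0 ≤ P a) ∧ ∑ a, P a = 1

/-- Input–output mutual information 𝓘(P, W) (in bits) of a channel `W`
from the finite alphabet `A` to the finite alphabet `B` under input distribution `P`. -/
noncomputable def mutInfo {A B : Type*} [Fintype A] [Fintype B]
    (P : A → ℝ) (W : A → B → ℝ) : ℝ :=
  ∑ a, ∑ b, P a * W a b * Real.logb 2 (W a b / ∑ a', P a' * W a' b)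

/-- Shannon entropy (base 2) of a distribution on a finite alphabet. -/
noncomputable def ent {B : Type*} [Fintype B] (Q : B → ℝ) : ℝ :=
  -∑ b, Q b * Real.logb 2 (Q b)


lemma aux_phi_concave : ConcaveOn ℝ (Set.Ici 0) (fun x : ℝ => -(x * Real.logb 2 x)) := by
  have h : (fun x : ℝ => -(x * Real.logb 2 x)) = (Real.log 2)⁻¹ • Real.negMulLog := by
    funext x
    simp only [Pi.smul_apply, smul_eq_mul, Real.negMulLog, Real.logb]
    ring
  rw [h]
  exact Real.concaveOn_negMulLog.smul (by positivity)

lemma ent_eq_sum_phi {B : Type*} [Fintype B] (Q : B → ℝ) :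
    ent Q = ∑ b, -(Q b * Real.logb 2 (Q b)) := by
  simp [ent]

lemma ent_jensen {I B : Type*} [Fintype I] [Fintype B] (w : I → ℝ) (v : I → B → ℝ)
    (hw : ∀ i, 0 ≤ w i) (hw1 : ∑ i, w i = 1) (hv : ∀ i b, 0 ≤ v i b) :
    ∑ i, w i * ent (v i) ≤ ent (fun b => ∑ i, w i * v i b) := by
  simp only [ent_eq_sum_phi, Finset.mul_sum]
  rw [Finset.sum_comm]
  apply Finset.sum_le_sum
  intro b _
  have := aux_phi_concave.le_map_sum (t := Finset.univ) (w := w) (p := fun i => v i b)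
    (fun i _ => hw i) hw1 (fun i _ => hv i b)
  simpa [smul_eq_mul, mul_comm] using this

lemma mutInfo_decomp {A B : Type*} [Fintype A] [Fintype B] (P : A → ℝ) (W : A → B → ℝ)
    (hP : ∀ a, 0 ≤ P a) (hW : ∀ a b, 0 ≤ W a b) :
    mutInfo P W = (∑ a, P a * ∑ b, W a b * Real.logb 2 (W a b))
      + ent (fun b => ∑ a, P a * W a b) := by
  have key : ∀ a b, P a * W a b * Real.logb 2 (W a b / ∑ a', P a' * W a' b)
      = P a * (W a b * Real.logb 2 (W a b))
        - P a * W a b * Real.logb 2 (∑ a', P a' * W a' b) := by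
    intro a b
    rcases eq_or_lt_of_le (mul_nonneg (hP a) (hW a b)) with h | h
    · rcases mul_eq_zero.mp h.symm with h0 | h0 <;> simp [h0]
    · have hWab : W a b ≠ 0 := by
        intro h0; rw [h0, mul_zero] at h; exact lt_irrefl 0 h
      have hout : (0:ℝ) < ∑ a', P a' * W a' b := by
        refine lt_of_lt_of_le h ?_
        exact Finset.single_le_sum (f := fun a' => P a' * W a' b)
          (fun a' _ => mul_nonneg (hP a') (hW a' b)) (Finset.mem_univ a)
      rw [Real.logb_div hWab (ne_of_gt hout)]
      ring
  unfold mutInfo ent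
  simp only [key, Finset.sum_sub_distrib]
  congr 1
  · apply Finset.sum_congr rfl
    intro a _
    rw [Finset.mul_sum]
  · rw [Finset.sum_comm]
    apply Finset.sum_congr rfl
    intro y _
    rw [Finset.sum_mul]

lemma mutInfo_jensen {I A B : Type*} [Fintype I] [Fintype A] [Fintype B]
    (w : I → ℝ) (Q : I → A → ℝ) (W : A → B → ℝ)
    (hw : ∀ i, 0 ≤ w i) (hw1 : ∑ i, w i = 1)
    (hQ : ∀ i a, 0 ≤ Q i a) (hW : ∀ a b, 0 ≤ W a b) :
    ∑ i, w i * mutInfo (Q i) W ≤ mutInfo (fun a => ∑ i, w i * Q i a) W := by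
  have hmix : ∀ a, 0 ≤ ∑ i, w i * Q i a := fun a =>
    Finset.sum_nonneg fun i _ => mul_nonneg (hw i) (hQ i a)
  have hd : ∀ i, mutInfo (Q i) W = (∑ a, Q i a * ∑ b, W a b * Real.logb 2 (W a b))
      + ent (fun b => ∑ a, Q i a * W a b) := fun i => mutInfo_decomp _ _ (hQ i) hW
  rw [mutInfo_decomp _ _ hmix hW]
  simp only [hd, mul_add, Finset.sum_add_distrib]
  apply add_le_add
  · apply le_of_eq
    simp only [Finset.sum_mul, Finset.mul_sum]
    rw [Finset.sum_comm]
    apply Finset.sum_congr rfl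
    intro a _
    rw [Finset.sum_comm]
    apply Finset.sum_congr rfl; intros; apply Finset.sum_congr rfl; intros; ring
  · have hout : (fun b => ∑ a, (∑ i, w i * Q i a) * W a b)
        = fun b => ∑ i, w i * ∑ a, Q i a * W a b := by
      funext b
      simp only [Finset.sum_mul, Finset.mul_sum]
      rw [Finset.sum_comm]
      apply Finset.sum_congr rfl; intros; apply Finset.sum_congr rfl; intros; ring
    rw [hout]
    exact ent_jensen w (fun i b => ∑ a, Q i a * W a b) hw hw1
      (fun i b => Finset.sum_nonneg fun a _ => mul_nonneg (hQ i a) (hW a b))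

lemma mutInfo_jensen2 {A B : Type*} [Fintype A] [Fintype B]
    (u v : ℝ) (Q Q' : A → ℝ) (W : A → B → ℝ)
    (hu : 0 ≤ u) (hv : 0 ≤ v) (huv : u + v = 1)
    (hQ : ∀ a, 0 ≤ Q a) (hQ' : ∀ a, 0 ≤ Q' a) (hW : ∀ a b, 0 ≤ W a b) :
    u * mutInfo Q W + v * mutInfo Q' W ≤ mutInfo (fun a => u * Q a + v * Q' a) W := by
  have := mutInfo_jensen (I := Bool) (fun i => if i then u else v)
    (fun i => if i then Q else Q') W
    (fun i => by cases i <;> simpa)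
    (by simpa [Fintype.sum_bool] using huv)
    (fun i a => by cases i <;> simp [hQ a, hQ' a]) hW
  simpa [Fintype.sum_bool] using this

lemma continuous_mul_logb : Continuous (fun t : ℝ => t * Real.logb 2 t) := by
  have h : (fun t : ℝ => t * Real.logb 2 t)
      = fun t => (t * Real.log t) * (Real.log 2)⁻¹ := by
    funext t; rw [Real.logb]; ring
  rw [h]
  exact Real.continuous_mul_log.mul continuous_const

section TWC

variable {X1 X2 Y1 Y2 : Type*} [Fintype X1] [Fintype X2] [Fintype Y1] [Fintype Y2]

/-- A joint input distribution on `X1 × X2`. -/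
def IsJointDist (P : X1 → X2 → ℝ) : Prop :=
  (∀ x1 x2, 0 ≤ P x1 x2) ∧ ∑ x1, ∑ x2, P x1 x2 = 1

/-- Marginal of a joint input distribution on `X1`. -/
noncomputable def margin1 (P : X1 → X2 → ℝ) (x1 : X1) : ℝ := ∑ x2, P x1 x2

/-- Marginal of a joint input distribution on `X2`. -/
noncomputable def margin2 (P : X1 → X2 → ℝ) (x2 : X2) : ℝ := ∑ x1, P x1 x2

/-- Conditional distribution P_{X₁|X₂=x₂}. -/
noncomputable def cond1given2 (P : X1 → X2 → ℝ) (x2 : X2) (x1 : X1) : ℝ :=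
  P x1 x2 / margin2 P x2

/-- Conditional distribution P_{X₂|X₁=x₁}. -/
noncomputable def cond2given1 (P : X1 → X2 → ℝ) (x1 : X1) (x2 : X2) : ℝ :=
  P x1 x2 / margin1 P x1

/-- The conditional mutual information I(X₁;Y₂|X₂) under the joint input distribution `P`,
where `W2` is the marginal channel P_{Y₂|X₁,X₂}. -/
noncomputable def condMI12 (P : X1 → X2 → ℝ) (W2 : X1 → X2 → Y2 → ℝ) : ℝ :=
  ∑ x2, margin2 P x2 * mutInfo (cond1given2 P x2) (fun x1 => W2 x1 x2)

/-- The conditional mutual information I(X₂;Y₁|X₁) under the joint input distribution `P`,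
where `W1` is the marginal channel P_{Y₁|X₁,X₂}. -/
noncomputable def condMI21 (P : X1 → X2 → ℝ) (W1 : X1 → X2 → Y1 → ℝ) : ℝ :=
  ∑ x1, margin1 P x1 * mutInfo (cond2given1 P x1) (fun x2 => W1 x1 x2)

/-- The rate region 𝓡(P_{X₁,X₂}). -/
noncomputable def rateRegion (W1 : X1 → X2 → Y1 → ℝ) (W2 : X1 → X2 → Y2 → ℝ)
    (P : X1 → X2 → ℝ) : Set (ℝ × ℝ) :=
  {r | 0 ≤ r.1 ∧ r.1 ≤ condMI12 P W2 ∧ 0 ≤ r.2 ∧ r.2 ≤ condMI21 P W1}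

/-- Shannon's inner bound C_I: the closure of the convex hull of the union of the
rate regions of all product input distributions. -/
noncomputable def innerBound (W1 : X1 → X2 → Y1 → ℝ) (W2 : X1 → X2 → Y2 → ℝ) :
    Set (ℝ × ℝ) :=
  closure (convexHull ℝ
    (⋃ P ∈ {P : X1 → X2 → ℝ |
        ∃ P1 P2, IsDist P1 ∧ IsDist P2 ∧ P = fun x1 x2 => P1 x1 * P2 x2},
      rateRegion W1 W2 P))

/-- Shannon's outer bound C_O: the union of the rate regions of all joint input
distributions. -/
noncomputable def outerBound (W1 : X1 → X2 → Y1 → ℝ) (W2 : X1 → X2 → Y2 → ℝ) :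
    Set (ℝ × ℝ) :=
  ⋃ P ∈ {P : X1 → X2 → ℝ | IsJointDist P}, rateRegion W1 W2 P

/-- The largest input–output mutual information of the one-way channel
P_{Y₂|X₁,X₂=x₂}. -/
noncomputable def capAt (W2 : X1 → X2 → Y2 → ℝ) (x2 : X2) : ℝ :=
  sSup {I | ∃ P : X1 → ℝ, IsDist P ∧ I = mutInfo P (fun x1 => W2 x1 x2)}

/-- α*: how close the channels {P_{Y₂|X₁,X₂=x₂}} are to having a common optimal
input distribution. -/
noncomputable def alphaStar (W2 : X1 → X2 → Y2 → ℝ) : ℝ :=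
  sInf {a | ∃ Pt : X1 → ℝ, IsDist Pt ∧
    a = ⨆ x2, |mutInfo Pt (fun x1 => W2 x1 x2) - capAt W2 x2|}

/-- β*: the degree of invariance in the input–output mutual information of the
channels {P_{Y₁|X₁=x₁,X₂}}. -/
noncomputable def betaStar (W1 : X1 → X2 → Y1 → ℝ) : ℝ :=
  sSup {b | ∃ (P : X2 → ℝ) (x1 x1' : X1), IsDist P ∧ x1 ≠ x1' ∧
    b = |mutInfo P (fun x2 => W1 x1 x2) - mutInfo P (fun x2 => W1 x1' x2)|}

/-- I*₁ = max_{x₂} max_{P} 𝓘(P, P_{Y₂|X₁,X₂=x₂}). -/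
noncomputable def IStar1 (W2 : X1 → X2 → Y2 → ℝ) : ℝ :=
  sSup {I | ∃ (x2 : X2) (P : X1 → ℝ), IsDist P ∧ I = mutInfo P (fun x1 => W2 x1 x2)}

/-- I*₂ = max_{x₁} max_{P} 𝓘(P, P_{Y₁|X₁=x₁,X₂}). -/
noncomputable def IStar2 (W1 : X1 → X2 → Y1 → ℝ) : ℝ :=
  sSup {I | ∃ (x1 : X1) (P : X2 → ℝ), IsDist P ∧ I = mutInfo P (fun x2 => W1 x1 x2)}

/-- Condition (a): `Pstar` is a common optimal input distribution for the channels
{P_{Y₂|X₁,X₂=x₂} : x₂ ∈ 𝒳₂}. -/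
def CondA (W2 : X1 → X2 → Y2 → ℝ) (Pstar : X1 → ℝ) : Prop :=
  IsDist Pstar ∧ ∀ x2 : X2, ∀ P : X1 → ℝ, IsDist P →
    mutInfo P (fun x1 => W2 x1 x2) ≤ mutInfo Pstar (fun x1 => W2 x1 x2)

/-- Condition (b1): for every input distribution on 𝒳₂, the input–output mutual
information of P_{Y₁|X₁=x₁,X₂} does not depend on x₁. -/
def CondB1 (W1 : X1 → X2 → Y1 → ℝ) : Prop :=
  ∀ P : X2 → ℝ, IsDist P → ∀ x1 x1' : X1,
    mutInfo P (fun x2 => W1 x1 x2) = mutInfo P (fun x2 => W1 x1' x2)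

/-- H(Y₁|X₁,X₂) under the joint input distribution `P`. -/
noncomputable def condEntFull (P : X1 → X2 → ℝ) (W1 : X1 → X2 → Y1 → ℝ) : ℝ :=
  ∑ x1, ∑ x2, P x1 x2 * ent (W1 x1 x2)

/-- H(Y₁|X₁) under the joint input distribution `P`. -/
noncomputable def condEntY1X1 (P : X1 → X2 → ℝ) (W1 : X1 → X2 → Y1 → ℝ) : ℝ :=
  ∑ x1, margin1 P x1 * ent (fun y1 => ∑ x2, cond2given1 P x1 x2 * W1 x1 x2 y1)

/-- Condition (b2), part (i): H(Y₁|X₁,X₂) depends on the joint input distribution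
only through its marginal on 𝒳₂. -/
def CondB2i (W1 : X1 → X2 → Y1 → ℝ) : Prop :=
  ∀ P Q : X1 → X2 → ℝ, IsJointDist P → IsJointDist Q →
    margin2 P = margin2 Q → condEntFull P W1 = condEntFull Q W1

/-- Condition (b2), part (ii), relative to the common optimal input `Pstar`:
H⁽¹⁾(Y₁|X₁) ≤ H⁽²⁾(Y₁|X₁) where P⁽²⁾ = P*_{X₁}·P⁽¹⁾_{X₂}. -/
def CondB2ii (W1 : X1 → X2 → Y1 → ℝ) (Pstar : X1 → ℝ) : Prop :=
  ∀ P : X1 → X2 → ℝ, IsJointDist P →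
    condEntY1X1 P W1 ≤ condEntY1X1 (fun x1 x2 => Pstar x1 * margin2 P x2) W1



noncomputable def auxF (W2 : X1 → X2 → Y2 → ℝ) (Pstar : X1 → ℝ) (Q : X2 → ℝ) : ℝ :=
  ∑ x2, Q x2 * mutInfo Pstar (fun x1 => W2 x1 x2)

noncomputable def auxG (W1 : X1 → X2 → Y1 → ℝ) (x1₀ : X1) (Q : X2 → ℝ) : ℝ :=
  (∑ x2, Q x2 * ∑ y, W1 x1₀ x2 y * Real.logb 2 (W1 x1₀ x2 y))
    + ent (fun y => ∑ x2, Q x2 * W1 x1₀ x2 y)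

lemma auxG_eq_mutInfo (W1 : X1 → X2 → Y1 → ℝ) (x1₀ : X1)
    (hW1 : ∀ x1 x2, IsDist (W1 x1 x2)) (Q : X2 → ℝ) (hQ : ∀ x2, 0 ≤ Q x2) :
    auxG W1 x1₀ Q = mutInfo Q (fun x2 => W1 x1₀ x2) :=
  (mutInfo_decomp Q _ hQ (fun x2 => (hW1 x1₀ x2).1)).symm

lemma aux_margin2_dist (P : X1 → X2 → ℝ) (hP : IsJointDist P) : IsDist (margin2 P) := by
  constructor
  · intro x2; exact Finset.sum_nonneg fun x1 _ => hP.1 x1 x2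
  · rw [← hP.2]; exact Finset.sum_comm

lemma aux_cond1_dist (P : X1 → X2 → ℝ) (hP : IsJointDist P) (x2 : X2)
    (h : margin2 P x2 ≠ 0) : IsDist (cond1given2 P x2) := by
  constructor
  · intro x1
    exact div_nonneg (hP.1 x1 x2) (Finset.sum_nonneg fun x1' _ => hP.1 x1' x2)
  · simp only [cond1given2, ← Finset.sum_div]
    exact div_self h

lemma aux_cond2_dist (P : X1 → X2 → ℝ) (hP : IsJointDist P) (x1 : X1)
    (h : margin1 P x1 ≠ 0) : IsDist (cond2given1 P x1) := by
  constructor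
  · intro x2
    exact div_nonneg (hP.1 x1 x2) (Finset.sum_nonneg fun x2' _ => hP.1 x1 x2')
  · simp only [cond2given1, ← Finset.sum_div]
    exact div_self h

lemma aux_prod_joint (Pstar : X1 → ℝ) (Q : X2 → ℝ) (hPs : IsDist Pstar) (hQ : IsDist Q) :
    IsJointDist (fun x1 x2 => Pstar x1 * Q x2) := by
  refine ⟨fun x1 x2 => mul_nonneg (hPs.1 x1) (hQ.1 x2), ?_⟩
  simp only [← Finset.mul_sum, hQ.2, mul_one, hPs.2]

lemma aux_condMI12_prod (W2 : X1 → X2 → Y2 → ℝ) (Pstar : X1 → ℝ) (Q : X2 → ℝ)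
    (h1 : ∑ x1, Pstar x1 = 1) :
    condMI12 (fun x1 x2 => Pstar x1 * Q x2) W2 = auxF W2 Pstar Q := by
  have hm : margin2 (fun x1 x2 => Pstar x1 * Q x2) = Q := by
    funext x2; simp [margin2, ← Finset.sum_mul, h1]
  unfold condMI12 auxF
  rw [hm]
  apply Finset.sum_congr rfl
  intro x2 _
  rcases eq_or_ne (Q x2) 0 with h | h
  · simp [h]
  · have hc : cond1given2 (fun x1 x2 => Pstar x1 * Q x2) x2 = Pstar := by
      funext x1
      simp only [cond1given2, hm]
      exact mul_div_cancel_right₀ (Pstar x1) h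
    rw [hc]

lemma aux_condMI21_prod (W1 : X1 → X2 → Y1 → ℝ) (hb1 : CondB1 W1)
    (Pstar : X1 → ℝ) (Q : X2 → ℝ) (hPs : IsDist Pstar) (hQ : IsDist Q) (x1₀ : X1) :
    condMI21 (fun x1 x2 => Pstar x1 * Q x2) W1 = mutInfo Q (fun x2 => W1 x1₀ x2) := by
  have hm : margin1 (fun x1 x2 => Pstar x1 * Q x2) = Pstar := by
    funext x1; simp [margin1, ← Finset.mul_sum, hQ.2]
  unfold condMI21
  rw [hm]
  have key : ∀ x1, Pstar x1 *
      mutInfo (cond2given1 (fun x1 x2 => Pstar x1 * Q x2) x1) (fun x2 => W1 x1 x2)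
      = Pstar x1 * mutInfo Q (fun x2 => W1 x1₀ x2) := by
    intro x1
    rcases eq_or_ne (Pstar x1) 0 with h | h
    · rw [h, zero_mul, zero_mul]
    · have hc : cond2given1 (fun x1 x2 => Pstar x1 * Q x2) x1 = Q := by
        funext x2
        simp only [cond2given1, hm]
        exact mul_div_cancel_left₀ (Q x2) h
      rw [hc, hb1 Q hQ x1 x1₀]
  simp only [key]
  rw [← Finset.sum_mul, hPs.2, one_mul]

lemma aux_condMI12_le (W2 : X1 → X2 → Y2 → ℝ) (Pstar : X1 → ℝ) (ha : CondA W2 Pstar)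
    (P : X1 → X2 → ℝ) (hP : IsJointDist P) :
    condMI12 P W2 ≤ auxF W2 Pstar (margin2 P) := by
  unfold condMI12 auxF
  apply Finset.sum_le_sum
  intro x2 _
  rcases eq_or_ne (margin2 P x2) 0 with h | h
  · rw [h, zero_mul, zero_mul]
  · exact mul_le_mul_of_nonneg_left (ha.2 x2 _ (aux_cond1_dist P hP x2 h))
      (Finset.sum_nonneg fun x1 _ => hP.1 x1 x2)

lemma aux_condMI21_le (W1 : X1 → X2 → Y1 → ℝ) (hb1 : CondB1 W1)
    (hW1 : ∀ x1 x2, IsDist (W1 x1 x2))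
    (P : X1 → X2 → ℝ) (hP : IsJointDist P) (x1₀ : X1) :
    condMI21 P W1 ≤ mutInfo (margin2 P) (fun x2 => W1 x1₀ x2) := by
  classical
  set Q' : X1 → X2 → ℝ :=
    fun x1 => if margin1 P x1 = 0 then margin2 P else cond2given1 P x1 with hQ'def
  have hm1nn : ∀ x1, 0 ≤ margin1 P x1 :=
    fun x1 => Finset.sum_nonneg fun x2 _ => hP.1 x1 x2
  have hm2nn : ∀ x2, 0 ≤ margin2 P x2 :=
    fun x2 => Finset.sum_nonneg fun x1 _ => hP.1 x1 x2
  have hQ'nn : ∀ x1 x2, 0 ≤ Q' x1 x2 := by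
    intro x1 x2
    simp only [hQ'def]
    split_ifs with h
    · exact hm2nn x2
    · exact div_nonneg (hP.1 x1 x2) (hm1nn x1)
  have hsum1 : ∑ x1, margin1 P x1 = 1 := hP.2
  have hstep : condMI21 P W1
      = ∑ x1, margin1 P x1 * mutInfo (Q' x1) (fun x2 => W1 x1₀ x2) := by
    unfold condMI21
    apply Finset.sum_congr rfl
    intro x1 _
    rcases eq_or_ne (margin1 P x1) 0 with h | h
    · rw [h, zero_mul, zero_mul]
    · have hd : IsDist (cond2given1 P x1) := aux_cond2_dist P hP x1 h
      simp only [hQ'def, if_neg h]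
      rw [hb1 _ hd x1 x1₀]
  rw [hstep]
  have hjen := mutInfo_jensen (margin1 P) Q' (fun x2 y => W1 x1₀ x2 y)
    hm1nn hsum1 hQ'nn (fun x2 y => (hW1 x1₀ x2).1 y)
  have hmix : (fun x2 => ∑ x1, margin1 P x1 * Q' x1 x2) = margin2 P := by
    funext x2
    have key : ∀ x1, margin1 P x1 * Q' x1 x2 = P x1 x2 := by
      intro x1
      rcases eq_or_ne (margin1 P x1) 0 with h | h
      · have hP0 : P x1 x2 = 0 :=
          (Finset.sum_eq_zero_iff_of_nonneg (fun x2' _ => hP.1 x1 x2')).mp h x2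
            (Finset.mem_univ x2)
        rw [h, zero_mul, hP0]
      · simp only [hQ'def, if_neg h, cond2given1]
        rw [mul_comm, div_mul_cancel₀ _ h]
    simp only [key]
    rfl
  rw [hmix] at hjen
  exact hjen

/-- if the DM-TWC satisfies conditions (a) and (b1), then C_I = C_O. -/
theorem stmt8 [Nonempty X1] [Nonempty X2]
    (W1 : X1 → X2 → Y1 → ℝ) (W2 : X1 → X2 → Y2 → ℝ)
    (hW1 : ∀ x1 x2, IsDist (W1 x1 x2)) (hW2 : ∀ x1 x2, IsDist (W2 x1 x2))
    (ha : ∃ Pstar : X1 → ℝ, CondA W2 Pstar) (hb1 : CondB1 W1) :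
    innerBound W1 W2 = outerBound W1 W2 := by
  classical
  obtain ⟨Pstar, haC⟩ := ha
  have hPs : IsDist Pstar := haC.1
  obtain ⟨x1₀⟩ := ‹Nonempty X1›
  have hW1nn : ∀ x2 y, 0 ≤ W1 x1₀ x2 y := fun x2 => (hW1 x1₀ x2).1
  set F : (X2 → ℝ) → ℝ := auxF W2 Pstar with hFdef
  set G : (X2 → ℝ) → ℝ := auxG W1 x1₀ with hGdef
  have hGmut : ∀ Q : X2 → ℝ, (∀ x2, 0 ≤ Q x2) →
      G Q = mutInfo Q (fun x2 => W1 x1₀ x2) := fun Q hQ =>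
    auxG_eq_mutInfo W1 x1₀ hW1 Q hQ
  set T : Set ((X2 → ℝ) × (ℝ × ℝ)) :=
    {p | p.1 ∈ stdSimplex ℝ X2 ∧ 0 ≤ p.2.1 ∧ p.2.1 ≤ F p.1 ∧ 0 ≤ p.2.2 ∧ p.2.2 ≤ G p.1}
    with hTdef
  set U : Set (ℝ × ℝ) := Prod.snd '' T with hUdef
  have hdist_iff : ∀ Q : X2 → ℝ, IsDist Q ↔ Q ∈ stdSimplex ℝ X2 := fun Q => Iff.rfl
  -- rate region of product input distributions
  have hRRprod : ∀ Q : X2 → ℝ, IsDist Q →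
      rateRegion W1 W2 (fun x1 x2 => Pstar x1 * Q x2)
        = {r : ℝ × ℝ | 0 ≤ r.1 ∧ r.1 ≤ F Q ∧ 0 ≤ r.2 ∧ r.2 ≤ G Q} := by
    intro Q hQ
    unfold rateRegion
    rw [aux_condMI12_prod W2 Pstar Q hPs.2,
      aux_condMI21_prod W1 hb1 Pstar Q hPs hQ x1₀, ← hGmut Q hQ.1]
  -- outer bound ⊆ U
  have houtU : outerBound W1 W2 ⊆ U := by
    intro r hr
    simp only [outerBound, Set.mem_iUnion, Set.mem_setOf_eq] at hr
    obtain ⟨P, hPj, h1, h2, h3, h4⟩ := hr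
    have hm2d : IsDist (margin2 P) := aux_margin2_dist P hPj
    refine ⟨(margin2 P, r), ⟨(hdist_iff _).mp hm2d, h1, ?_, h3, ?_⟩, rfl⟩
    · exact h2.trans (aux_condMI12_le W2 Pstar haC P hPj)
    · rw [hGmut _ hm2d.1]
      exact h4.trans (aux_condMI21_le W1 hb1 hW1 P hPj x1₀)
  -- U ⊆ outer bound
  have hUout : U ⊆ outerBound W1 W2 := by
    rintro r ⟨⟨Q, r'⟩, ⟨hQs, h1, h2, h3, h4⟩, rfl⟩
    have hQ : IsDist Q := (hdist_iff Q).mpr hQs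
    simp only [outerBound, Set.mem_iUnion, Set.mem_setOf_eq]
    refine ⟨fun x1 x2 => Pstar x1 * Q x2, aux_prod_joint Pstar Q hPs hQ, ?_⟩
    rw [hRRprod Q hQ]
    exact ⟨h1, h2, h3, h4⟩
  -- U is convex
  have hUconv : Convex ℝ U := by
    rintro r ⟨⟨Q, rr⟩, ⟨hQs, h1, h2, h3, h4⟩, rfl⟩ s ⟨⟨Q', ss⟩, ⟨hQs', k1, k2, k3, k4⟩, rfl⟩
      a b hA hB hAB
    have hmixnn : ∀ x2, 0 ≤ a * Q x2 + b * Q' x2 := fun x2 =>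
      add_nonneg (mul_nonneg hA (hQs.1 x2)) (mul_nonneg hB (hQs'.1 x2))
    have hmixs : (fun x2 => a * Q x2 + b * Q' x2) ∈ stdSimplex ℝ X2 := by
      have := convex_stdSimplex ℝ X2 hQs hQs' hA hB hAB
      exact this
    refine ⟨(fun x2 => a * Q x2 + b * Q' x2, a • (Q, rr).2 + b • (Q', ss).2),
      ⟨hmixs, ?_, ?_, ?_, ?_⟩, rfl⟩
    · show 0 ≤ a * rr.1 + b * ss.1
      exact add_nonneg (mul_nonneg hA h1) (mul_nonneg hB k1)
    · show a * rr.1 + b * ss.1 ≤ F (fun x2 => a * Q x2 + b * Q' x2)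
      have hFlin : F (fun x2 => a * Q x2 + b * Q' x2) = a * F Q + b * F Q' := by
        simp only [hFdef, auxF, add_mul, Finset.sum_add_distrib, Finset.mul_sum, mul_assoc]
      rw [hFlin]
      exact add_le_add (mul_le_mul_of_nonneg_left h2 hA) (mul_le_mul_of_nonneg_left k2 hB)
    · show 0 ≤ a * rr.2 + b * ss.2
      exact add_nonneg (mul_nonneg hA h3) (mul_nonneg hB k3)
    · show a * rr.2 + b * ss.2 ≤ G (fun x2 => a * Q x2 + b * Q' x2)
      have hcc : a * G Q + b * G Q' ≤ G (fun x2 => a * Q x2 + b * Q' x2) := by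
        rw [hGmut Q hQs.1, hGmut Q' hQs'.1, hGmut _ hmixnn]
        exact mutInfo_jensen2 a b Q Q' _ hA hB hAB hQs.1 hQs'.1 hW1nn
      exact le_trans
        (add_le_add (mul_le_mul_of_nonneg_left h4 hA) (mul_le_mul_of_nonneg_left k4 hB)) hcc
  -- continuity of F and G
  have hFc : Continuous F := by
    simp only [hFdef, auxF]
    exact continuous_finset_sum _ fun x2 _ => (continuous_apply x2).mul continuous_const
  have hGc : Continuous G := by
    simp only [hGdef, auxG]
    apply Continuous.add
    · exact continuous_finset_sum _ fun x2 _ => (continuous_apply x2).mul continuous_const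
    · have hent : (fun Q : X2 → ℝ => ent (fun y => ∑ x2, Q x2 * W1 x1₀ x2 y))
          = fun Q : X2 → ℝ => -∑ y, (∑ x2, Q x2 * W1 x1₀ x2 y)
              * Real.logb 2 (∑ x2, Q x2 * W1 x1₀ x2 y) := rfl
      rw [hent]
      apply Continuous.neg
      apply continuous_finset_sum
      intro y _
      exact continuous_mul_logb.comp
        (continuous_finset_sum _ fun x2 _ => (continuous_apply x2).mul continuous_const)
  -- T is closed
  have hTclosed : IsClosed T := by
    have c1 : IsClosed {p : (X2 → ℝ) × (ℝ × ℝ) | p.1 ∈ stdSimplex ℝ X2} :=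
      (isCompact_stdSimplex ℝ X2).isClosed.preimage continuous_fst
    have c2 : IsClosed {p : (X2 → ℝ) × (ℝ × ℝ) | 0 ≤ p.2.1} :=
      isClosed_le continuous_const continuous_snd.fst
    have c3 : IsClosed {p : (X2 → ℝ) × (ℝ × ℝ) | p.2.1 ≤ F p.1} :=
      isClosed_le continuous_snd.fst (hFc.comp continuous_fst)
    have c4 : IsClosed {p : (X2 → ℝ) × (ℝ × ℝ) | 0 ≤ p.2.2} :=
      isClosed_le continuous_const continuous_snd.snd
    have c5 : IsClosed {p : (X2 → ℝ) × (ℝ × ℝ) | p.2.2 ≤ G p.1} :=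
      isClosed_le continuous_snd.snd (hGc.comp continuous_fst)
    exact c1.inter (c2.inter (c3.inter (c4.inter c5)))
  -- the simplex is nonempty
  have hsimpne : (stdSimplex ℝ X2).Nonempty := by
    obtain ⟨x2⟩ := ‹Nonempty X2›
    refine ⟨fun z => if z = x2 then 1 else 0, fun z => ?_, ?_⟩
    · dsimp only; split_ifs <;> norm_num
    · simp [Finset.sum_ite_eq']
  obtain ⟨Qf, hQf, hQfmax⟩ :=
    (isCompact_stdSimplex ℝ X2).exists_isMaxOn hsimpne hFc.continuousOn
  obtain ⟨Qg, hQg, hQgmax⟩ :=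
    (isCompact_stdSimplex ℝ X2).exists_isMaxOn hsimpne hGc.continuousOn
  have hTsub : T ⊆ (stdSimplex ℝ X2) ×ˢ (Set.Icc 0 (F Qf) ×ˢ Set.Icc 0 (G Qg)) := by
    rintro ⟨Q, r⟩ ⟨hQs, h1, h2, h3, h4⟩
    exact ⟨hQs, ⟨h1, h2.trans (hQfmax hQs)⟩, ⟨h3, h4.trans (hQgmax hQs)⟩⟩
  have hK : IsCompact ((stdSimplex ℝ X2) ×ˢ (Set.Icc (0:ℝ) (F Qf) ×ˢ Set.Icc (0:ℝ) (G Qg))) :=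
    (isCompact_stdSimplex ℝ X2).prod (isCompact_Icc.prod isCompact_Icc)
  have hTcomp : IsCompact T := hK.of_isClosed_subset hTclosed hTsub
  have hUclosed : IsClosed U := (hTcomp.image continuous_snd).isClosed
  -- conclusion
  apply Set.Subset.antisymm
  · -- inner ⊆ outer
    unfold innerBound
    have hS : (⋃ P ∈ {P : X1 → X2 → ℝ |
          ∃ P1 P2, IsDist P1 ∧ IsDist P2 ∧ P = fun x1 x2 => P1 x1 * P2 x2},
        rateRegion W1 W2 P) ⊆ U := by
      intro r hr
      simp only [Set.mem_iUnion, Set.mem_setOf_eq] at hr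
      obtain ⟨P, ⟨P1, P2, hP1, hP2, rfl⟩, hrP⟩ := hr
      apply houtU
      simp only [outerBound, Set.mem_iUnion, Set.mem_setOf_eq]
      exact ⟨_, aux_prod_joint P1 P2 hP1 hP2, hrP⟩
    exact (closure_minimal (convexHull_min hS hUconv) hUclosed).trans hUout
  · -- outer ⊆ inner
    intro r hr
    simp only [outerBound, Set.mem_iUnion, Set.mem_setOf_eq] at hr
    obtain ⟨P, hPj, h1, h2, h3, h4⟩ := hr
    have hm2d : IsDist (margin2 P) := aux_margin2_dist P hPj
    apply subset_closure
    apply subset_convexHull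
    simp only [Set.mem_iUnion, Set.mem_setOf_eq]
    refine ⟨fun x1 x2 => Pstar x1 * margin2 P x2,
      ⟨Pstar, margin2 P, hPs, hm2d, rfl⟩, ?_⟩
    rw [hRRprod _ hm2d]
    refine ⟨h1, h2.trans (aux_condMI12_le W2 Pstar haC P hPj), h3, ?_⟩
    rw [hGmut _ hm2d.1]
    exact h4.trans (aux_condMI21_le W1 hb1 hW1 P hPj x1₀)

end TWC
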